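/- Let m, n > 0 and let f : [0,m] → ℝ≥0 and g : [0,n] → ℝ≥0 be concave functions whose right derivatives satisfy f'₊(x) ≥ g'₊(y) + ε for all x ∈ [0,m) and y ∈ [0,n), where ε ≥ 0. Let A and B be the regions under the graphs of f and g respectively. Then |A+B| ≥ (m+n)(|A|/m + |B|/n) + (mn/2)·ε. -/

import Mathlib

open MeasureTheory Pointwise

section AuxEpigraph

open Set Filter Topology intervalIntegral

private lemma aux_slope_le_rderiv {m : ℝ} {f : ℝ → ℝ} {d : ℝ} (hf : ConcaveOn ℝ (Set.Icc 0 m) f)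
    {x w : ℝ} (hx : 0 ≤ x) (hxw : x < w) (hwm : w ≤ m)
    (hd : HasDerivWithinAt f d (Set.Ici x) x) :
    f w - f x ≤ (w - x) * d := by
  have hpos : (0:ℝ) < w - x := by linarith
  have ht : Tendsto (slope f x) (𝓝[>] x) (𝓝 d) := by
    have := hasDerivWithinAt_iff_tendsto_slope.1 hd
    rwa [show Set.Ici x \ {x} = Set.Ioi x from Set.Ici_sdiff_left] at this
  have hev : ∀ᶠ z in 𝓝[>] x, slope f x w ≤ slope f x z := by
    filter_upwards [Ioo_mem_nhdsGT hxw] with z hz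
    have h := hf.slope_anti_adjacent ⟨hx, by linarith⟩ ⟨hx.trans hxw.le, hwm⟩ hz.1 hz.2
    rw [slope_def_field, slope_def_field]
    have hzx : (0:ℝ) < z - x := by linarith [hz.1]
    have hwz : (0:ℝ) < w - z := by linarith [hz.2]
    rw [div_le_div_iff₀ hwz hzx] at h
    rw [div_le_div_iff₀ hpos hzx]
    nlinarith
  have := ge_of_tendsto ht hev
  rw [slope_def_field, div_le_iff₀ hpos] at this
  linarith [this]

private lemma aux_rderiv_le_slope {m : ℝ} {f : ℝ → ℝ} {d : ℝ} (hf : ConcaveOn ℝ (Set.Icc 0 m) f)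
    {x w : ℝ} (hx : 0 ≤ x) (hxw : x < w) (hwm : w < m)
    (hd : HasDerivWithinAt f d (Set.Ici w) w) :
    (w - x) * d ≤ f w - f x := by
  have hpos : (0:ℝ) < w - x := by linarith
  have ht : Tendsto (slope f w) (𝓝[>] w) (𝓝 d) := by
    have := hasDerivWithinAt_iff_tendsto_slope.1 hd
    rwa [show Set.Ici w \ {w} = Set.Ioi w from Set.Ici_sdiff_left] at this
  have hev : ∀ᶠ z in 𝓝[>] w, slope f w z ≤ slope f x w := by
    filter_upwards [Ioo_mem_nhdsGT hwm] with z hz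
    have h := hf.slope_anti_adjacent ⟨hx, by linarith⟩ ⟨by linarith [hz.1], hz.2.le⟩ hxw hz.1
    rw [slope_def_field, slope_def_field]
    exact h
  have := le_of_tendsto ht hev
  rw [slope_def_field, le_div_iff₀ hpos] at this
  linarith [this]

private lemma aux_key {m n ε : ℝ} {f g f' g' : ℝ → ℝ}
    (hf : ConcaveOn ℝ (Set.Icc 0 m) f) (hg : ConcaveOn ℝ (Set.Icc 0 n) g)
    (hf' : ∀ x ∈ Set.Ico (0:ℝ) m, HasDerivWithinAt f (f' x) (Set.Ici x) x)
    (hg' : ∀ y ∈ Set.Ico (0:ℝ) n, HasDerivWithinAt g (g' y) (Set.Ici y) y)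
    (hgap : ∀ x ∈ Set.Ico (0:ℝ) m, ∀ y ∈ Set.Ico (0:ℝ) n, f' x ≥ g' y + ε)
    {x y δ : ℝ} (hx : 0 ≤ x) (hδ : 0 < δ) (hxδ : x + δ < m) (hδy : δ ≤ y) (hyn : y ≤ n) :
    f x + g y + ε * δ ≤ f (x + δ) + g (y - δ) := by
  have hx1 : x + δ ∈ Set.Ico (0:ℝ) m := ⟨by linarith, hxδ⟩
  have hy1 : y - δ ∈ Set.Ico (0:ℝ) n := ⟨by linarith, by linarith⟩
  have h1 : (x + δ - x) * f' (x + δ) ≤ f (x + δ) - f x :=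
    aux_rderiv_le_slope hf hx (by linarith) hxδ (hf' _ hx1)
  have h2 : g y - g (y - δ) ≤ (y - (y - δ)) * g' (y - δ) :=
    aux_slope_le_rderiv hg hy1.1 (by linarith) hyn (hg' _ hy1)
  have h3 := hgap _ hx1 _ hy1
  nlinarith

private lemma aux_mem_sum {m n t c : ℝ} {f g : ℝ → ℝ} {A B : Set (ℝ × ℝ)}
    (hA : A = {p : ℝ × ℝ | p.2 ∈ Set.Icc 0 m ∧ 0 ≤ p.1 ∧ p.1 ≤ f p.2})
    (hB : B = {p : ℝ × ℝ | p.2 ∈ Set.Icc 0 n ∧ 0 ≤ p.1 ∧ p.1 ≤ g p.2})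
    {x y : ℝ} (hx : x ∈ Set.Icc 0 m) (hy : y ∈ Set.Icc 0 n)
    (hfx : 0 ≤ f x) (hgy : 0 ≤ g y)
    (hxy : x + y = t) (hc : 0 ≤ c) (hcle : c ≤ f x + g y) :
    (c, t) ∈ A + B := by
  refine Set.mem_add.2 ⟨(min c (f x), x), ?_, (c - min c (f x), y), ?_, ?_⟩
  · rw [hA]; exact ⟨hx, le_min hc hfx, min_le_right _ _⟩
  · rw [hB]
    refine ⟨hy, by simp [min_le_left c (f x)], ?_⟩
    rcases le_total c (f x) with h | h
    · simp [min_eq_left h, hgy]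
    · show c - min c (f x) ≤ g y
      rw [min_eq_right h]; linarith
  · have : min c (f x) + (c - min c (f x)) = c := by ring
    simp [Prod.ext_iff, this, hxy]

private lemma aux_fiber {m n ε : ℝ} (hm : 0 < m) (hn : 0 < n) {f g f' g' : ℝ → ℝ}
    (hf : ConcaveOn ℝ (Set.Icc 0 m) f) (hg : ConcaveOn ℝ (Set.Icc 0 n) g)
    (hf0 : ∀ x ∈ Set.Icc (0:ℝ) m, 0 ≤ f x) (hg0 : ∀ x ∈ Set.Icc (0:ℝ) n, 0 ≤ g x)
    (hf' : ∀ x ∈ Set.Ico (0:ℝ) m, HasDerivWithinAt f (f' x) (Set.Ici x) x)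
    (hg' : ∀ y ∈ Set.Ico (0:ℝ) n, HasDerivWithinAt g (g' y) (Set.Ici y) y)
    (hgap : ∀ x ∈ Set.Ico (0:ℝ) m, ∀ y ∈ Set.Ico (0:ℝ) n, f' x ≥ g' y + ε)
    {A B : Set (ℝ × ℝ)}
    (hA : A = {p : ℝ × ℝ | p.2 ∈ Set.Icc 0 m ∧ 0 ≤ p.1 ∧ p.1 ≤ f p.2})
    (hB : B = {p : ℝ × ℝ | p.2 ∈ Set.Icc 0 n ∧ 0 ≤ p.1 ∧ p.1 ≤ g p.2})
    {t c : ℝ} (ht : t ∈ Set.Ioo 0 (m + n)) (hc : 0 < c)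
    (hcφ : c < f (m * t / (m + n)) + g (n * t / (m + n)) +
      ε * min (m - m * t / (m + n)) (n * t / (m + n))) :
    (c, t) ∈ A + B := by
  set s := m + n with hs
  have hspos : 0 < s := by positivity
  obtain ⟨ht0, hts⟩ := ht
  set xt := m * t / s with hxt
  set yt := n * t / s with hyt
  have hxt0 : 0 < xt := by positivity
  have hytn : yt < n := by
    rw [hyt, div_lt_iff₀ hspos]; nlinarith
  have hxtm : xt < m := by
    rw [hxt, div_lt_iff₀ hspos]; nlinarith
  have hyt0 : 0 < yt := by positivity
  have hsum : xt + yt = t := by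
    rw [hxt, hyt]; field_simp; ring
  set δt := min (m - xt) yt with hδt
  have hδt0 : 0 < δt := lt_min (by linarith) hyt0
  rcases le_or_gt c (f xt + g yt) with hle | hgt
  · exact aux_mem_sum hA hB ⟨hxt0.le, hxtm.le⟩ ⟨hyt0.le, hytn.le⟩
      (hf0 _ ⟨hxt0.le, hxtm.le⟩) (hg0 _ ⟨hyt0.le, hytn.le⟩) hsum hc.le hle
  · have hεδ : c - (f xt + g yt) < ε * δt := by linarith [hcφ]
    have hε : 0 < ε := by
      by_contra h
      push_neg at h
      nlinarith
    set δ₀ := (c - (f xt + g yt)) / ε with hδ₀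
    have hδ₀0 : 0 < δ₀ := div_pos (by linarith) hε
    have hδ₀ε : ε * δ₀ = c - (f xt + g yt) := by rw [hδ₀]; field_simp
    have hδ₀t : δ₀ < δt := by
      rw [hδ₀, div_lt_iff₀ hε]; nlinarith
    have hδ₀m : xt + δ₀ < m := by
      have := min_le_left (m - xt) yt; rw [← hδt] at this; linarith
    have hδ₀y : δ₀ ≤ yt := by
      have := min_le_right (m - xt) yt; rw [← hδt] at this; linarith
    have hkey := aux_key hf hg hf' hg' hgap hxt0.le hδ₀0 hδ₀m hδ₀y hytn.le
    have hx' : xt + δ₀ ∈ Set.Icc (0:ℝ) m := ⟨by linarith, hδ₀m.le⟩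
    have hy' : yt - δ₀ ∈ Set.Icc (0:ℝ) n := ⟨by linarith, by linarith⟩
    exact aux_mem_sum hA hB hx' hy' (hf0 _ hx') (hg0 _ hy')
      (by linarith [hsum]) hc.le (by linarith)

private lemma aux_aemeas {m : ℝ} {f : ℝ → ℝ} (hconc : ConcaveOn ℝ (Set.Icc 0 m) f) :
    AEMeasurable f (volume.restrict (Set.Icc 0 m)) := by
  have hcont : ContinuousOn f (Set.Ioo 0 m) := by
    simpa [interior_Icc] using hconc.continuousOn_interior
  have h1 : AEMeasurable f (volume.restrict (Set.Ioo 0 m)) :=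
    hcont.aemeasurable measurableSet_Ioo
  rwa [Measure.restrict_congr_set Ioo_ae_eq_Icc] at h1

private lemma aux_bdd {m : ℝ} {f : ℝ → ℝ} (hconc : ConcaveOn ℝ (Set.Icc 0 m) f)
    (hf0 : ∀ x ∈ Set.Icc (0:ℝ) m, 0 ≤ f x) :
    ∀ x ∈ Set.Icc (0:ℝ) m, f x ≤ 2 * f (m / 2) := by
  intro x hx
  have hmx : m - x ∈ Set.Icc (0:ℝ) m := ⟨by linarith [hx.2], by linarith [hx.1]⟩
  have h2 := hconc.2 hx hmx (by norm_num : (0:ℝ) ≤ 1/2) (by norm_num : (0:ℝ) ≤ 1/2) (by norm_num)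
  have h0 : (1/2 : ℝ) • x + (1/2 : ℝ) • (m - x) = m / 2 := by
    simp only [smul_eq_mul]; ring
  rw [h0] at h2
  have h3 := hf0 _ hmx
  simp only [smul_eq_mul] at h2
  linarith

private lemma aux_integrable {m : ℝ} {f : ℝ → ℝ} (hconc : ConcaveOn ℝ (Set.Icc 0 m) f)
    (hf0 : ∀ x ∈ Set.Icc (0:ℝ) m, 0 ≤ f x) :
    IntegrableOn f (Set.Icc 0 m) := by
  haveI : IsFiniteMeasure (volume.restrict (Set.Icc (0:ℝ) m)) :=
    ⟨by rw [Measure.restrict_apply_univ]; exact measure_Icc_lt_top⟩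
  refine ⟨(aux_aemeas hconc).aestronglyMeasurable, ?_⟩
  apply HasFiniteIntegral.of_bounded (C := 2 * f (m / 2))
  filter_upwards [ae_restrict_mem measurableSet_Icc] with x hx
  rw [Real.norm_eq_abs, abs_of_nonneg (hf0 x hx)]
  exact aux_bdd hconc hf0 x hx

private lemma aux_vol_le {m : ℝ} (hm : 0 < m) {f : ℝ → ℝ} (hconc : ConcaveOn ℝ (Set.Icc 0 m) f)
    (hf0 : ∀ x ∈ Set.Icc (0:ℝ) m, 0 ≤ f x) :
    volume {p : ℝ × ℝ | p.2 ∈ Set.Icc 0 m ∧ 0 ≤ p.1 ∧ p.1 ≤ f p.2} ≤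
      ENNReal.ofReal (∫ x in Set.Icc 0 m, f x) := by
  have hIA : (0:ℝ) ≤ ∫ x in Set.Icc 0 m, f x :=
    setIntegral_nonneg measurableSet_Icc hf0
  apply ENNReal.le_of_forall_pos_le_add
  intro η hη _
  have hc : (0:ℝ) < (η:ℝ) / (2 * m) := by positivity
  set c : ℝ := (η:ℝ) / (2 * m) with hcdef
  set fc : ℝ → ℝ := (Set.Icc 0 m).indicator (fun x => f x + c) with hfc
  have hfcm : AEMeasurable fc volume :=
    (aemeasurable_indicator_iff measurableSet_Icc).2
      ((aux_aemeas hconc).add aemeasurable_const)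
  have hsub : {p : ℝ × ℝ | p.2 ∈ Set.Icc 0 m ∧ 0 ≤ p.1 ∧ p.1 ≤ f p.2} ⊆
      Prod.swap ⁻¹' regionBetween (fun _ => -c) fc (Set.Icc 0 m) := by
    rintro ⟨a, x⟩ ⟨hx, ha0, haf⟩
    simp only [Set.mem_preimage, Prod.swap_prod_mk, regionBetween, Set.mem_setOf_eq,
      Set.mem_Ioo]
    refine ⟨hx, by linarith, ?_⟩
    rw [hfc, Set.indicator_of_mem hx]
    exact lt_of_le_of_lt haf (by linarith)
  have hnull : NullMeasurableSet (regionBetween (fun _ => -c) fc (Set.Icc 0 m))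
      (volume.prod volume) :=
    nullMeasurableSet_regionBetween volume aemeasurable_const hfcm
      measurableSet_Icc.nullMeasurableSet
  have hint : IntegrableOn (fun x => f x + 2 * c) (Set.Icc 0 m) :=
    (aux_integrable hconc hf0).add (integrableOn_const measure_Icc_lt_top.ne)
  calc volume {p : ℝ × ℝ | p.2 ∈ Set.Icc 0 m ∧ 0 ≤ p.1 ∧ p.1 ≤ f p.2}
      ≤ volume (Prod.swap ⁻¹' regionBetween (fun _ => -c) fc (Set.Icc 0 m)) :=
        measure_mono hsub
    _ = (volume.prod volume) (Prod.swap ⁻¹' regionBetween (fun _ => -c) fc (Set.Icc 0 m)) := by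
        rw [← Measure.volume_eq_prod]
    _ = (volume.prod volume) (regionBetween (fun _ => -c) fc (Set.Icc 0 m)) :=
        Measure.measurePreserving_swap.measure_preimage hnull
    _ = ∫⁻ x in Set.Icc 0 m, ENNReal.ofReal (fc x - (-c)) := by
        have h := volume_regionBetween_eq_lintegral (μ := volume) (f := fun _ => -c)
          (g := fc) (s := Set.Icc 0 m) aemeasurable_const hfcm.restrict measurableSet_Icc
        simpa using h
    _ = ∫⁻ x in Set.Icc 0 m, ENNReal.ofReal (f x + 2 * c) := by
        apply setLIntegral_congr_fun measurableSet_Icc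
        intro x hx; dsimp only
        rw [hfc, Set.indicator_of_mem hx]
        norm_num
        ring_nf
    _ = ENNReal.ofReal (∫ x in Set.Icc 0 m, (f x + 2 * c)) := by
        rw [ofReal_integral_eq_lintegral_ofReal hint]
        filter_upwards [ae_restrict_mem measurableSet_Icc] with x hx
        have := hf0 x hx; positivity
    _ = ENNReal.ofReal ((∫ x in Set.Icc 0 m, f x) + 2 * c * m) := by
        rw [integral_add (aux_integrable hconc hf0)
          (integrableOn_const measure_Icc_lt_top.ne)]
        congr 1
        rw [setIntegral_const, measureReal_def, Real.volume_Icc, smul_eq_mul,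
          ENNReal.toReal_ofReal (by linarith)]
        ring
    _ ≤ ENNReal.ofReal (∫ x in Set.Icc 0 m, f x) + η := by
        rw [ENNReal.ofReal_add hIA (by positivity)]
        gcongr
        have h2cm : 2 * c * m = (η:ℝ) := by
          rw [hcdef]; field_simp
        rw [h2cm, ENNReal.ofReal_coe_nnreal]

private lemma aux_integrableOn_bdd {s : ℝ} {φ : ℝ → ℝ} (hc : ContinuousOn φ (Set.Ioo 0 s))
    {C : ℝ} (hb : ∀ t ∈ Set.Ioo (0:ℝ) s, |φ t| ≤ C) : IntegrableOn φ (Set.Ioo 0 s) := by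
  haveI : IsFiniteMeasure (volume.restrict (Set.Ioo (0:ℝ) s)) :=
    ⟨by rw [Measure.restrict_apply_univ]; exact measure_Ioo_lt_top⟩
  refine ⟨(hc.aemeasurable measurableSet_Ioo).aestronglyMeasurable, ?_⟩
  apply HasFiniteIntegral.of_bounded (C := C)
  filter_upwards [ae_restrict_mem measurableSet_Ioo] with x hx
  exact hb x hx

private lemma aux_vol_ge {s : ℝ} (hs : 0 < s) {φ : ℝ → ℝ} (hφc : ContinuousOn φ (Set.Ioo 0 s))
    (hφ0 : ∀ t ∈ Set.Ioo (0:ℝ) s, 0 ≤ φ t) {C : ℝ}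
    (hφb : ∀ t ∈ Set.Ioo (0:ℝ) s, φ t ≤ C) (D : Set (ℝ × ℝ))
    (hD : ∀ t ∈ Set.Ioo (0:ℝ) s, ∀ c : ℝ, 0 < c → c < φ t → (c, t) ∈ D) :
    ENNReal.ofReal (∫ t in Set.Ioo 0 s, φ t) ≤ volume D := by
  set φ₀ : ℝ → ℝ := (Set.Ioo 0 s).indicator φ with hφ₀
  have hφm : AEMeasurable φ (volume.restrict (Set.Ioo 0 s)) :=
    hφc.aemeasurable measurableSet_Ioo
  have hφ₀m : AEMeasurable φ₀ volume :=
    (aemeasurable_indicator_iff measurableSet_Ioo).2 hφm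
  have hint : IntegrableOn φ (Set.Ioo 0 s) :=
    aux_integrableOn_bdd hφc (C := C) (fun t ht => by
      rw [abs_of_nonneg (hφ0 t ht)]; exact hφb t ht)
  have hnull : NullMeasurableSet (regionBetween (fun _ => 0) φ₀ (Set.Ioo 0 s))
      (volume.prod volume) :=
    nullMeasurableSet_regionBetween volume aemeasurable_const hφ₀m
      measurableSet_Ioo.nullMeasurableSet
  have hsub : Prod.swap ⁻¹' regionBetween (fun _ => 0) φ₀ (Set.Ioo 0 s) ⊆ D := by
    rintro ⟨c, t⟩ hp
    obtain ⟨ht, hc0, hcφ⟩ := hp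
    simp only [Prod.swap_prod_mk] at ht hc0 hcφ
    rw [hφ₀, Set.indicator_of_mem ht] at hcφ
    exact hD t ht c hc0 hcφ
  calc ENNReal.ofReal (∫ t in Set.Ioo 0 s, φ t)
      = ∫⁻ t in Set.Ioo 0 s, ENNReal.ofReal (φ t) := by
        rw [ofReal_integral_eq_lintegral_ofReal hint]
        filter_upwards [ae_restrict_mem measurableSet_Ioo] with x hx
        exact hφ0 x hx
    _ = ∫⁻ t in Set.Ioo 0 s, ENNReal.ofReal (φ₀ t - 0) := by
        apply setLIntegral_congr_fun measurableSet_Ioo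
        intro t ht; dsimp only
        rw [hφ₀, Set.indicator_of_mem ht, sub_zero]
    _ = (volume.prod volume) (regionBetween (fun _ => 0) φ₀ (Set.Ioo 0 s)) := by
        have h := volume_regionBetween_eq_lintegral (μ := volume) (f := fun _ => 0)
          (g := φ₀) (s := Set.Ioo 0 s) aemeasurable_const hφ₀m.restrict measurableSet_Ioo
        simpa using h.symm
    _ = (volume.prod volume) (Prod.swap ⁻¹' regionBetween (fun _ => 0) φ₀ (Set.Ioo 0 s)) :=
        (Measure.measurePreserving_swap.measure_preimage hnull).symm
    _ = volume (Prod.swap ⁻¹' regionBetween (fun _ => 0) φ₀ (Set.Ioo 0 s)) := by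
        rw [← Measure.volume_eq_prod]
    _ ≤ volume D := measure_mono hsub

private lemma aux_comp_integrable {m s : ℝ} (hm : 0 < m) (hs : 0 < s) {f : ℝ → ℝ}
    (hconc : ConcaveOn ℝ (Set.Icc 0 m) f) (hf0 : ∀ x ∈ Set.Icc (0:ℝ) m, 0 ≤ f x) :
    IntegrableOn (fun t => f (m * t / s)) (Set.Ioo 0 s) := by
  have hmap : ∀ t ∈ Set.Ioo (0:ℝ) s, m * t / s ∈ Set.Ioo 0 m := by
    intro t ht
    constructor
    · have := ht.1; positivity
    · rw [div_lt_iff₀ hs]; nlinarith [ht.2]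
  have hfc : ContinuousOn f (Set.Ioo 0 m) := by
    simpa [interior_Icc] using hconc.continuousOn_interior
  have hcont : ContinuousOn (fun t => f (m * t / s)) (Set.Ioo 0 s) :=
    hfc.comp ((continuous_const.mul continuous_id).div_const s).continuousOn hmap
  apply aux_integrableOn_bdd hcont (C := 2 * f (m / 2))
  intro t ht
  have h1 := hmap t ht
  have h2 : m * t / s ∈ Set.Icc (0:ℝ) m := ⟨h1.1.le, h1.2.le⟩
  rw [abs_of_nonneg (hf0 _ h2)]
  exact aux_bdd hconc hf0 _ h2

private lemma aux_comp_integral {m s : ℝ} (hm : 0 < m) (hs : 0 < s) {f : ℝ → ℝ}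
    (hint : IntegrableOn (fun t => f (m * t / s)) (Set.Ioo 0 s)) :
    ∫ t in Set.Ioo 0 s, f (m * t / s) = (s / m) * ∫ x in Set.Icc 0 m, f x := by
  have h1 : ∫ t in Set.Ioo 0 s, f (m * t / s) = ∫ t in (0:ℝ)..s, f ((m/s) * t) := by
    rw [intervalIntegral.integral_of_le hs.le, ← integral_Ioc_eq_integral_Ioo]
    apply setIntegral_congr_fun measurableSet_Ioc
    intro t _
    congr 1
    ring
  rw [h1, intervalIntegral.integral_comp_mul_left f (by positivity : (m/s) ≠ 0)]
  rw [show m / s * 0 = 0 by ring, show m / s * s = m by field_simp, smul_eq_mul, inv_div]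
  rw [intervalIntegral.integral_of_le hm.le, ← integral_Icc_eq_integral_Ioc]

private lemma aux_min_integral {m n : ℝ} (hm : 0 < m) (hn : 0 < n) :
    ∫ t in Set.Ioo 0 (m + n), min (m - m * t / (m + n)) (n * t / (m + n)) = m * n / 2 := by
  set s := m + n with hsdef
  have hs : 0 < s := by positivity
  have hc : Continuous (fun t : ℝ => min (m - m * t / s) (n * t / s)) := by
    apply Continuous.min
    · exact continuous_const.sub ((continuous_const.mul continuous_id).div_const s)
    · exact (continuous_const.mul continuous_id).div_const s
  have hIoo : ∫ t in Set.Ioo 0 s, min (m - m * t / s) (n * t / s) =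
      ∫ t in (0:ℝ)..s, min (m - m * t / s) (n * t / s) := by
    rw [intervalIntegral.integral_of_le hs.le, ← integral_Ioc_eq_integral_Ioo]
  have hsplit : (∫ t in (0:ℝ)..m, min (m - m * t / s) (n * t / s)) +
      (∫ t in (m:ℝ)..s, min (m - m * t / s) (n * t / s)) =
      ∫ t in (0:ℝ)..s, min (m - m * t / s) (n * t / s) :=
    intervalIntegral.integral_add_adjacent_intervals
      (hc.intervalIntegrable 0 m) (hc.intervalIntegrable m s)
  have h1 : (∫ t in (0:ℝ)..m, min (m - m * t / s) (n * t / s)) = n / s * (m ^ 2 / 2) := by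
    have he : Set.EqOn (fun t => min (m - m * t / s) (n * t / s)) (fun t => (n / s) * t)
        (Set.uIcc 0 m) := by
      intro t ht
      rw [Set.uIcc_of_le hm.le] at ht
      have h0 : n * t / s + m * t / s = t := by field_simp; ring
      have : min (m - m * t / s) (n * t / s) = n * t / s :=
        min_eq_right (by linarith [ht.2])
      simp only [this]
      ring
    rw [intervalIntegral.integral_congr he, intervalIntegral.integral_const_mul,
      integral_id]
    ring
  have h2 : (∫ t in (m:ℝ)..s, min (m - m * t / s) (n * t / s)) =
      (s - m) * m - m / s * ((s ^ 2 - m ^ 2) / 2) := by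
    have he : Set.EqOn (fun t => min (m - m * t / s) (n * t / s))
        (fun t => m - (m / s) * t) (Set.uIcc m s) := by
      intro t ht
      rw [Set.uIcc_of_le (by linarith : m ≤ s)] at ht
      have h0 : n * t / s + m * t / s = t := by field_simp; ring
      have : min (m - m * t / s) (n * t / s) = m - m * t / s :=
        min_eq_left (by linarith [ht.1])
      simp only [this]
      ring
    rw [intervalIntegral.integral_congr he]
    have hil : IntervalIntegrable (fun t : ℝ => (m / s) * t) volume m s :=
      (continuous_const.mul continuous_id').intervalIntegrable m s
    rw [intervalIntegral.integral_sub intervalIntegrable_const hil,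
      intervalIntegral.integral_const, intervalIntegral.integral_const_mul, integral_id,
      smul_eq_mul]
  rw [hIoo, ← hsplit, h1, h2, hsdef]
  field_simp
  ring

end AuxEpigraph

theorem epigraph_sumset_slope_gap_bound (m n ε : ℝ) (hm : 0 < m) (hn : 0 < n) (hε : 0 ≤ ε)
    (f g f' g' : ℝ → ℝ)
    (hf : ConcaveOn ℝ (Set.Icc 0 m) f) (hg : ConcaveOn ℝ (Set.Icc 0 n) g)
    (hf0 : ∀ x ∈ Set.Icc (0:ℝ) m, 0 ≤ f x) (hg0 : ∀ x ∈ Set.Icc (0:ℝ) n, 0 ≤ g x)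
    (hf' : ∀ x ∈ Set.Ico (0:ℝ) m, HasDerivWithinAt f (f' x) (Set.Ici x) x)
    (hg' : ∀ y ∈ Set.Ico (0:ℝ) n, HasDerivWithinAt g (g' y) (Set.Ici y) y)
    (hgap : ∀ x ∈ Set.Ico (0:ℝ) m, ∀ y ∈ Set.Ico (0:ℝ) n, f' x ≥ g' y + ε)
    (A B : Set (ℝ × ℝ))
    (hA : A = {p : ℝ × ℝ | p.2 ∈ Set.Icc 0 m ∧ 0 ≤ p.1 ∧ p.1 ≤ f p.2})
    (hB : B = {p : ℝ × ℝ | p.2 ∈ Set.Icc 0 n ∧ 0 ≤ p.1 ∧ p.1 ≤ g p.2}) :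
    (volume (A + B)).toReal ≥
      (m + n) * ((volume A).toReal / m + (volume B).toReal / n) + (m * n / 2) * ε := by
  have hs : (0:ℝ) < m + n := by linarith
  set IA := ∫ x in Set.Icc 0 m, f x with hIAdef
  set IB := ∫ x in Set.Icc 0 n, g x with hIBdef
  have hIA0 : 0 ≤ IA := setIntegral_nonneg measurableSet_Icc hf0
  have hIB0 : 0 ≤ IB := setIntegral_nonneg measurableSet_Icc hg0
  have hvA : volume A ≤ ENNReal.ofReal IA := by rw [hA]; exact aux_vol_le hm hf hf0
  have hvB : volume B ≤ ENNReal.ofReal IB := by rw [hB]; exact aux_vol_le hn hg hg0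
  set φ : ℝ → ℝ := fun t => f (m * t / (m + n)) + g (n * t / (m + n)) +
      ε * min (m - m * t / (m + n)) (n * t / (m + n)) with hφdef
  have hmapf : ∀ t ∈ Set.Ioo (0:ℝ) (m + n), m * t / (m + n) ∈ Set.Ioo 0 m := by
    intro t ht
    constructor
    · have := ht.1; positivity
    · rw [div_lt_iff₀ hs]; nlinarith [ht.2]
  have hmapg : ∀ t ∈ Set.Ioo (0:ℝ) (m + n), n * t / (m + n) ∈ Set.Ioo 0 n := by
    intro t ht
    constructor
    · have := ht.1; positivity
    · rw [div_lt_iff₀ hs]; nlinarith [ht.2]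
  have hfc : ContinuousOn f (Set.Ioo 0 m) := by
    simpa [interior_Icc] using hf.continuousOn_interior
  have hgc : ContinuousOn g (Set.Ioo 0 n) := by
    simpa [interior_Icc] using hg.continuousOn_interior
  have hφc : ContinuousOn φ (Set.Ioo 0 (m + n)) := by
    rw [hφdef]
    apply ContinuousOn.add
    apply ContinuousOn.add
    · exact hfc.comp ((continuous_const.mul continuous_id').div_const (m + n)).continuousOn hmapf
    · exact hgc.comp ((continuous_const.mul continuous_id').div_const (m + n)).continuousOn hmapg
    · exact (continuous_const.mul ((continuous_const.sub ((continuous_const.mul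
        continuous_id').div_const (m + n))).min ((continuous_const.mul
        continuous_id').div_const (m + n)))).continuousOn
  have hφ0 : ∀ t ∈ Set.Ioo (0:ℝ) (m + n), 0 ≤ φ t := by
    intro t ht
    have h1 := hmapf t ht
    have h2 := hmapg t ht
    have hf1 := hf0 _ ⟨h1.1.le, h1.2.le⟩
    have hg1 := hg0 _ ⟨h2.1.le, h2.2.le⟩
    have hmin : 0 ≤ min (m - m * t / (m + n)) (n * t / (m + n)) :=
      le_min (by linarith [h1.2]) h2.1.le
    have hm2 := mul_nonneg hε hmin
    simp only [hφdef]
    linarith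
  have hφb : ∀ t ∈ Set.Ioo (0:ℝ) (m + n), φ t ≤ 2 * f (m / 2) + 2 * g (n / 2) + ε * n := by
    intro t ht
    have h1 := hmapf t ht
    have h2 := hmapg t ht
    have hb1 := aux_bdd hf hf0 _ ⟨h1.1.le, h1.2.le⟩
    have hb2 := aux_bdd hg hg0 _ ⟨h2.1.le, h2.2.le⟩
    have hmin : min (m - m * t / (m + n)) (n * t / (m + n)) ≤ n :=
      (min_le_right _ _).trans h2.2.le
    have hm2 := mul_le_mul_of_nonneg_left hmin hε
    simp only [hφdef]
    linarith
  have hD : ∀ t ∈ Set.Ioo (0:ℝ) (m + n), ∀ c : ℝ, 0 < c → c < φ t → (c, t) ∈ A + B := by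
    intro t ht c hc hcφ
    simp only [hφdef] at hcφ
    exact aux_fiber hm hn hf hg hf0 hg0 hf' hg' hgap hA hB ht hc hcφ
  have hvol_ge := aux_vol_ge hs hφc hφ0 hφb (A + B) hD
  have hintf := aux_comp_integrable hm hs hf hf0
  have hintg := aux_comp_integrable hn hs hg hg0
  have hminc : Continuous (fun t : ℝ => ε * min (m - m * t / (m + n)) (n * t / (m + n))) :=
    continuous_const.mul ((continuous_const.sub ((continuous_const.mul
      continuous_id').div_const (m + n))).min ((continuous_const.mul
      continuous_id').div_const (m + n)))
  have hintmin : IntegrableOn (fun t : ℝ => ε * min (m - m * t / (m + n)) (n * t / (m + n)))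
      (Set.Ioo 0 (m + n)) := by
    apply aux_integrableOn_bdd hminc.continuousOn (C := ε * n)
    intro t ht
    have h1 := hmapf t ht
    have h2 := hmapg t ht
    have hmin0 : 0 ≤ min (m - m * t / (m + n)) (n * t / (m + n)) :=
      le_min (by linarith [h1.2]) h2.1.le
    have hminn : min (m - m * t / (m + n)) (n * t / (m + n)) ≤ n :=
      (min_le_right _ _).trans h2.2.le
    rw [abs_of_nonneg (mul_nonneg hε hmin0)]
    exact mul_le_mul_of_nonneg_left hminn hε
  have hsplit : ∫ t in Set.Ioo 0 (m + n), φ t =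
      (m + n) / m * IA + (m + n) / n * IB + ε * (m * n / 2) := by
    rw [hφdef]
    have hfg : IntegrableOn (fun t : ℝ => f (m * t / (m + n)) + g (n * t / (m + n)))
        (Set.Ioo 0 (m + n)) := hintf.add hintg
    rw [show (∫ t in Set.Ioo 0 (m + n), (fun t => f (m * t / (m + n)) + g (n * t / (m + n)) +
        ε * min (m - m * t / (m + n)) (n * t / (m + n))) t) = ∫ t in Set.Ioo 0 (m + n),
        ((f (m * t / (m + n)) + g (n * t / (m + n))) +
        ε * min (m - m * t / (m + n)) (n * t / (m + n))) from rfl]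
    rw [MeasureTheory.integral_add hfg hintmin,
      MeasureTheory.integral_add hintf hintg]
    rw [aux_comp_integral hm hs hintf, aux_comp_integral hn hs hintg]
    rw [MeasureTheory.integral_const_mul, aux_min_integral hm hn]
  have hbox : A + B ⊆ Set.Icc (0:ℝ) (2 * f (m / 2) + 2 * g (n / 2)) ×ˢ Set.Icc (0:ℝ) (m + n) := by
    rintro p ⟨a, ha, b, hb, rfl⟩
    rw [hA] at ha
    rw [hB] at hb
    obtain ⟨ha2, ha0, haf⟩ := ha
    obtain ⟨hb2, hb0, hbg⟩ := hb
    have h1 := aux_bdd hf hf0 _ ha2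
    have h2 := aux_bdd hg hg0 _ hb2
    refine ⟨⟨?_, ?_⟩, ?_, ?_⟩
    · show (0:ℝ) ≤ a.1 + b.1; linarith
    · show a.1 + b.1 ≤ _; linarith
    · show (0:ℝ) ≤ a.2 + b.2; linarith [ha2.1, hb2.1]
    · show a.2 + b.2 ≤ m + n; linarith [ha2.2, hb2.2]
  have hfin : volume (A + B) ≠ ⊤ := by
    apply ne_top_of_le_ne_top _ (measure_mono hbox)
    rw [Measure.volume_eq_prod, Measure.prod_prod]
    exact ENNReal.mul_ne_top (by simp [Real.volume_Icc]) (by simp [Real.volume_Icc])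
  have hI0 : 0 ≤ ∫ t in Set.Ioo 0 (m + n), φ t := by
    rw [hsplit]
    have e1 : 0 ≤ (m + n) / m * IA := mul_nonneg (by positivity) hIA0
    have e2 : 0 ≤ (m + n) / n * IB := mul_nonneg (by positivity) hIB0
    have e3 : 0 ≤ ε * (m * n / 2) := mul_nonneg hε (by positivity)
    linarith
  have hVS : (m + n) / m * IA + (m + n) / n * IB + ε * (m * n / 2) ≤ (volume (A + B)).toReal := by
    rw [← hsplit]
    have h2 := ENNReal.toReal_mono hfin hvol_ge
    rwa [ENNReal.toReal_ofReal hI0] at h2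
  have hVA : (volume A).toReal ≤ IA := by
    have := ENNReal.toReal_mono ENNReal.ofReal_ne_top hvA
    rwa [ENNReal.toReal_ofReal hIA0] at this
  have hVB : (volume B).toReal ≤ IB := by
    have := ENNReal.toReal_mono ENNReal.ofReal_ne_top hvB
    rwa [ENNReal.toReal_ofReal hIB0] at this
  have e1 : (m + n) * ((volume A).toReal / m + (volume B).toReal / n) =
      (m + n) / m * (volume A).toReal + (m + n) / n * (volume B).toReal := by
    field_simp
  have c1 : (m + n) / m * (volume A).toReal ≤ (m + n) / m * IA :=
    mul_le_mul_of_nonneg_left hVA (by positivity)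
  have c2 : (m + n) / n * (volume B).toReal ≤ (m + n) / n * IB :=
    mul_le_mul_of_nonneg_left hVB (by positivity)
  rw [ge_iff_le, e1]
  linarith
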